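/- Let ε > 0 and let φ ∈ C^∞([0, ε]) satisfy φ(0) = 0. Define h : [0, ε] → ℝ by h(t) = (1/t)·∫₀ᵗ φ(τ) dτ for t ∈ (0, ε] and h(0) = 0. Then for every nonnegative integer n, the n-th derivative of h at 0 satisfies h^{(n)}(0) = φ^{(n)}(0)/(n+1), and moreover h^{(n)}(t) → φ^{(n)}(0)/(n+1) as t → 0⁺. -/

import Mathlib

open MeasureTheory Filter Real
open scoped Topology RealInnerProductSpace

noncomputable section

abbrev E3 := EuclideanSpace ℝ (Fin 3)
abbrev E2 := EuclideanSpace ℝ (Fin 2)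

def vec3 (a b c : ℝ) : E3 := (WithLp.equiv 2 (Fin 3 → ℝ)).symm ![a, b, c]
def vec2 (a b : ℝ) : E2 := (WithLp.equiv 2 (Fin 2 → ℝ)).symm ![a, b]

/-- The great circle of the unit sphere in `ℝ³` orthogonal to `θ`. -/
def circleSet (θ : E3) : Set E3 := {α | α ∈ Metric.sphere (0:E3) 1 ∧ ⟪θ, α⟫ = 0}

/-- The Minkowski–Funk transform: integral over the great circle orthogonal to `θ`
with respect to one-dimensional Hausdorff (arc-length) measure. -/
def funkT (φ : E3 → ℝ) (θ : E3) : ℝ := ∫ α in circleSet θ, φ α ∂μH[1]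

/-- The spherical Radon transform with centers on the sphere of radius `r`. -/
def sphRadon (r : ℝ) (f : E3 → ℝ) (α : E3) (t : ℝ) : ℝ :=
  ∫ β in Metric.sphere (0:E3) 1, f (r • α + t • β) ∂μH[2]

/-- The transform `R_P` arising in PAT with circular integrating detectors. -/
def RP (r : ℝ) (f : E3 → ℝ) (θ : E3) (t : ℝ) : ℝ :=
  ∫ α in circleSet θ, (∫ β in Metric.sphere (0:E3) 1, f (r • α + t • β) ∂μH[2]) ∂μH[1]

/-- Rotation of a vector in `ℝ²` by `π/2`. -/
def perp (ω : E2) : E2 := vec2 (-(ω 1)) (ω 0)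

/-- The two-dimensional Radon transform. -/
def radon2 (Φ : E2 → ℝ) (ω : E2) (s : ℝ) : ℝ := ∫ ν : ℝ, Φ (s • ω + ν • perp ω)

/-- Principal value of `∫ F`, where the singular set is removed via `{s | ε < |e s|}`:
the limit as `ε → 0⁺` of the integrals over `{s | |e s| > ε}`. -/
def pv (F : ℝ → ℝ) (e : ℝ → ℝ) : ℝ :=
  limUnder (𝓝[>] (0:ℝ)) (fun ε => ∫ s in {s | ε < |e s|}, F s)

/-- The Hilbert transform `Hu(s) = (1/π) p.v. ∫ u(s')/(s-s') ds'`. -/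
def hilbertT (u : ℝ → ℝ) (s : ℝ) : ℝ :=
  (1/π) * pv (fun s' => u s' / (s - s')) (fun s' => s - s')

/-- The backprojection operator `R#u(x) = ∫_{S¹} u(ω, x·ω) dS(ω)`. -/
def backproj (u : E2 → ℝ → ℝ) (x : E2) : ℝ :=
  ∫ ω in Metric.sphere (0:E2) 1, u ω ⟪x, ω⟫ ∂μH[1]

namespace Stmt12Aux

open Set intervalIntegral

variable {ε : ℝ} {φ : ℝ → ℝ}

/-- The `n`-th derivative of `φ` within `[0, ε]`. -/
def ψ (φ : ℝ → ℝ) (ε : ℝ) (n : ℕ) : ℝ → ℝ := iteratedDerivWithin n φ (Set.Icc 0 ε)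

/-- The candidate for the `n`-th derivative of `h`. -/
def G (φ : ℝ → ℝ) (ε : ℝ) (n : ℕ) (t : ℝ) : ℝ := ∫ s in (0:ℝ)..1, s ^ n * ψ φ ε n (t * s)

lemma mem_mul (hε : 0 < ε) {t s : ℝ} (ht : t ∈ Icc 0 ε) (hs : s ∈ Icc (0:ℝ) 1) :
    t * s ∈ Icc 0 ε :=
  ⟨mul_nonneg ht.1 hs.1, (mul_le_of_le_one_right ht.1 hs.2).trans ht.2⟩

lemma psi_cont (hε : 0 < ε) (hφ : ContDiffOn ℝ (⊤:ℕ∞) φ (Icc 0 ε)) (n : ℕ) :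
    ContinuousOn (ψ φ ε n) (Icc 0 ε) :=
  hφ.continuousOn_iteratedDerivWithin (by exact_mod_cast le_top) (uniqueDiffOn_Icc hε)

lemma psi_hasDeriv (hε : 0 < ε) (hφ : ContDiffOn ℝ (⊤:ℕ∞) φ (Icc 0 ε)) (n : ℕ) {x : ℝ}
    (hx : x ∈ Icc 0 ε) :
    HasDerivWithinAt (ψ φ ε n) (ψ φ ε (n+1) x) (Icc 0 ε) x := by
  have hd := (hφ.differentiableOn_iteratedDerivWithin (m := n)
    (by exact_mod_cast WithTop.coe_lt_top _) (uniqueDiffOn_Icc hε)) x hx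
  have h2 := hd.hasDerivWithinAt
  have h3 : ψ φ ε (n+1) x = derivWithin (ψ φ ε n) (Icc 0 ε) x :=
    congrFun iteratedDerivWithin_succ x
  rw [h3]
  exact h2

lemma ftc1 (hε : 0 < ε) (hφ : ContDiffOn ℝ (⊤:ℕ∞) φ (Icc 0 ε)) (n : ℕ) {x : ℝ}
    (hx : x ∈ Icc 0 ε) :
    ∫ u in (0:ℝ)..x, ψ φ ε (n+1) u = ψ φ ε n x - ψ φ ε n 0 := by
  refine intervalIntegral.integral_eq_sub_of_hasDeriv_right_of_le hx.1
    ((psi_cont hε hφ n).mono (Icc_subset_Icc_right hx.2)) (fun y hy => ?_) ?_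
  · have hy' : y ∈ Icc 0 ε := ⟨hy.1.le, (hy.2.trans_le hx.2).le⟩
    exact (((psi_hasDeriv hε hφ n hy').hasDerivAt
      (Icc_mem_nhds hy.1 (hy.2.trans_le hx.2))).hasDerivWithinAt)
  · exact ((psi_cont hε hφ (n+1)).mono
      (by rw [uIcc_of_le hx.1]; exact Icc_subset_Icc_right hx.2)).intervalIntegrable

lemma G_zero (n : ℕ) : G φ ε n 0 = ψ φ ε n 0 / (n + 1) := by
  simp only [G, zero_mul]
  rw [intervalIntegral.integral_mul_const, integral_pow]
  simp only [one_pow, ne_eq]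
  rw [zero_pow (by omega : n + 1 ≠ 0)]
  push_cast
  ring

lemma G_cont (hε : 0 < ε) (hφ : ContDiffOn ℝ (⊤:ℕ∞) φ (Icc 0 ε)) (n : ℕ) :
    ContinuousOn (G φ ε n) (Icc 0 ε) := by
  obtain ⟨C, hC⟩ := isCompact_Icc.exists_bound_of_continuousOn (psi_cont hε hφ n)
  intro t₀ ht₀
  apply intervalIntegral.continuousWithinAt_of_dominated_interval (bound := fun _ => C)
  · filter_upwards [eventually_mem_nhdsWithin] with x hx
    have hc : ContinuousOn (fun s => s ^ n * ψ φ ε n (x * s)) (Icc (0:ℝ) 1) := by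
      refine (continuous_pow n).continuousOn.mul ?_
      exact (psi_cont hε hφ n).comp (continuous_const.mul continuous_id).continuousOn
        (fun s hs => mem_mul hε hx hs)
    rw [uIoc_of_le (zero_le_one : (0:ℝ) ≤ 1)]
    exact (hc.mono Ioc_subset_Icc_self).aestronglyMeasurable measurableSet_Ioc
  · filter_upwards [eventually_mem_nhdsWithin] with x hx
    refine ae_of_all _ fun s hs => ?_
    rw [uIoc_of_le (zero_le_one : (0:ℝ) ≤ 1)] at hs
    have hs' : s ∈ Icc (0:ℝ) 1 := ⟨hs.1.le, hs.2⟩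
    have h1 : ‖s ^ n * ψ φ ε n (x * s)‖ = |s| ^ n * ‖ψ φ ε n (x * s)‖ := by
      rw [norm_mul, norm_pow]; rfl
    rw [h1]
    calc |s| ^ n * ‖ψ φ ε n (x * s)‖ ≤ 1 * C := by
          apply mul_le_mul
          · exact pow_le_one₀ (abs_nonneg s) (abs_le.2 ⟨by linarith [hs'.1], hs'.2⟩)
          · exact hC _ (mem_mul hε hx hs')
          · exact norm_nonneg _
          · exact zero_le_one
      _ = C := one_mul C
  · exact intervalIntegrable_const
  · refine ae_of_all _ fun s hs => ?_
    rw [uIoc_of_le (zero_le_one : (0:ℝ) ≤ 1)] at hs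
    have hs' : s ∈ Icc (0:ℝ) 1 := ⟨hs.1.le, hs.2⟩
    refine continuousWithinAt_const.mul ?_
    have hmaps : MapsTo (fun x => x * s) (Icc 0 ε) (Icc 0 ε) :=
      fun x hx => mem_mul hε hx hs'
    exact ContinuousWithinAt.comp (f := fun x => x * s) (g := ψ φ ε n)
      ((psi_cont hε hφ n) _ (hmaps ht₀))
      ((continuous_id.mul continuous_const).continuousWithinAt) hmaps

lemma fubini (hε : 0 < ε) (hφ : ContDiffOn ℝ (⊤:ℕ∞) φ (Icc 0 ε)) (n : ℕ) {t : ℝ}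
    (ht : t ∈ Icc 0 ε) :
    ∫ u in (0:ℝ)..t, G φ ε (n+1) u = G φ ε n t - G φ ε n 0 := by
  have h01 : (0:ℝ) ≤ 1 := zero_le_one
  have hcont : ContinuousOn (fun p : ℝ × ℝ => p.2 ^ (n+1) * ψ φ ε (n+1) (p.1 * p.2))
      (Icc 0 t ×ˢ Icc 0 1) := by
    refine ((continuous_snd.pow _).continuousOn).mul ?_
    refine (psi_cont hε hφ (n+1)).comp (continuous_fst.mul continuous_snd).continuousOn ?_
    rintro ⟨u, s⟩ ⟨hu, hs⟩
    exact mem_mul hε ⟨hu.1, hu.2.trans ht.2⟩ hs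
  have hInt : Integrable (Function.uncurry fun u s => s ^ (n+1) * ψ φ ε (n+1) (u * s))
      ((volume.restrict (Ioc 0 t)).prod (volume.restrict (Ioc 0 1))) := by
    rw [Measure.prod_restrict, ← Measure.volume_eq_prod]
    refine ((hcont.integrableOn_compact (isCompact_Icc.prod isCompact_Icc)).mono_set
      (Set.prod_mono Ioc_subset_Icc_self Ioc_subset_Icc_self))
  have key := MeasureTheory.integral_integral_swap hInt
  have lhs : ∫ u in (0:ℝ)..t, G φ ε (n+1) u
      = ∫ u in Ioc (0:ℝ) t, ∫ s in Ioc (0:ℝ) 1, s ^ (n+1) * ψ φ ε (n+1) (u * s) := by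
    rw [integral_of_le ht.1]
    refine setIntegral_congr_fun measurableSet_Ioc fun u _ => ?_
    simp only [G]
    rw [integral_of_le h01]
  have inner : ∀ s ∈ Ioc (0:ℝ) 1,
      ∫ u in Ioc (0:ℝ) t, s ^ (n+1) * ψ φ ε (n+1) (u * s)
        = s ^ n * ψ φ ε n (t * s) - s ^ n * ψ φ ε n (0 * s) := by
    intro s hs
    have hs0 : s ≠ 0 := ne_of_gt hs.1
    have hts : t * s ∈ Icc 0 ε := mem_mul hε ht ⟨hs.1.le, hs.2⟩
    rw [← integral_of_le ht.1, intervalIntegral.integral_const_mul,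
      intervalIntegral.integral_comp_mul_right _ hs0, zero_mul]
    rw [ftc1 hε hφ n hts, smul_eq_mul]
    field_simp
    ring
  rw [lhs, key, setIntegral_congr_fun measurableSet_Ioc inner]
  rw [← integral_of_le h01]
  have i1 : IntervalIntegrable (fun s => s ^ n * ψ φ ε n (t * s)) volume 0 1 := by
    refine ContinuousOn.intervalIntegrable ?_
    rw [uIcc_of_le h01]
    exact (continuous_pow n).continuousOn.mul
      ((psi_cont hε hφ n).comp (continuous_const.mul continuous_id).continuousOn
        (fun s hs => mem_mul hε ht hs))
  have i2 : IntervalIntegrable (fun s => s ^ n * ψ φ ε n (0 * s)) volume 0 1 := by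
    simp only [zero_mul]
    exact (((continuous_pow n).mul continuous_const).intervalIntegrable 0 1)
  rw [intervalIntegral.integral_sub i1 i2]
  rfl

lemma G_hasDeriv (hε : 0 < ε) (hφ : ContDiffOn ℝ (⊤:ℕ∞) φ (Icc 0 ε)) (n : ℕ) {t : ℝ}
    (ht : t ∈ Icc 0 ε) :
    HasDerivWithinAt (G φ ε n) (G φ ε (n+1) t) (Icc 0 ε) t := by
  have hGc := G_cont hε hφ (n+1)
  have hInt : ∀ x ∈ Icc (0:ℝ) ε, IntervalIntegrable (G φ ε (n+1)) volume 0 x := fun x hx =>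
    (hGc.mono (by rw [uIcc_of_le hx.1]; exact Icc_subset_Icc_right hx.2)).intervalIntegrable
  have key : HasDerivWithinAt (fun x => ∫ u in (0:ℝ)..x, G φ ε (n+1) u)
      (G φ ε (n+1) t) (Icc 0 ε) t := by
    rcases eq_or_lt_of_le ht.1 with h0 | h0
    · -- t = 0
      have h0' : t = 0 := h0.symm
      subst h0'
      have hmeas : StronglyMeasurableAtFilter (G φ ε (n+1)) (𝓝[Set.Ioi (0:ℝ)] 0) :=
        ⟨Ioc 0 ε, Ioc_mem_nhdsGT hε,
          (hGc.mono Ioc_subset_Icc_self).aestronglyMeasurable measurableSet_Ioc⟩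
      have hb : ContinuousWithinAt (G φ ε (n+1)) (Set.Ioi (0:ℝ)) 0 := by
        have hle : 𝓝[Set.Ioi (0:ℝ)] 0 ≤ 𝓝[Icc (0:ℝ) ε] 0 := by
          rw [← nhdsWithin_Ioc_eq_nhdsGT hε]
          exact nhdsWithin_mono _ Ioc_subset_Icc_self
        exact Tendsto.mono_left (hGc 0 ht) hle
      have := intervalIntegral.integral_hasDerivWithinAt_right
        (s := Set.Ici (0:ℝ)) (t := Set.Ioi (0:ℝ)) (hInt 0 ht) hmeas hb
      exact this.mono (Icc_subset_Ici_self)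
    · rcases eq_or_lt_of_le ht.2 with hε' | hε'
      · -- t = ε
        subst hε'
        have hmeas : StronglyMeasurableAtFilter (G φ t (n+1)) (𝓝[Set.Iic t] t) :=
          ⟨Icc 0 t, Icc_mem_nhdsLE_of_mem ⟨h0, le_rfl⟩,
            hGc.aestronglyMeasurable measurableSet_Icc⟩
        have hb : ContinuousWithinAt (G φ t (n+1)) (Set.Iic t) t := by
          have hle : 𝓝[Set.Iic t] t ≤ 𝓝[Icc (0:ℝ) t] t :=
            le_of_eq (nhdsWithin_Icc_eq_nhdsLE h0).symm
          exact Tendsto.mono_left (hGc t ht) hle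
        have := intervalIntegral.integral_hasDerivWithinAt_right
          (s := Set.Iic t) (t := Set.Iic t) (hInt t ht) hmeas hb
        exact this.mono (Icc_subset_Iic_self)
      · -- interior
        have hmeas : StronglyMeasurableAtFilter (G φ ε (n+1)) (𝓝 t) :=
          ⟨Ioo 0 ε, Ioo_mem_nhds h0 hε',
            (hGc.mono Ioo_subset_Icc_self).aestronglyMeasurable measurableSet_Ioo⟩
        have hca : ContinuousAt (G φ ε (n+1)) t :=
          (hGc t ht).continuousAt (Icc_mem_nhds h0 hε')
        exact (intervalIntegral.integral_hasDerivAt_right (hInt t ht) hmeas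
          hca).hasDerivWithinAt
  have key2 : HasDerivWithinAt (fun x => G φ ε n 0 + ∫ u in (0:ℝ)..x, G φ ε (n+1) u)
      (G φ ε (n+1) t) (Icc 0 ε) t := by
    have := (hasDerivWithinAt_const t (Icc (0:ℝ) ε) (G φ ε n 0)).add key
    rw [zero_add] at this
    exact this
  refine key2.congr (fun y hy => ?_) ?_
  · have := fubini hε hφ n hy; linarith
  · have := fubini hε hφ n ht; linarith

lemma main_eqOn (hε : 0 < ε) (hφ : ContDiffOn ℝ (⊤:ℕ∞) φ (Icc 0 ε)) {h : ℝ → ℝ}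
    (hh : ∀ t ∈ Set.Ioc (0:ℝ) ε, h t = (∫ τ in (0:ℝ)..t, φ τ) / t) (hh0 : h 0 = 0)
    (h0 : φ 0 = 0) (n : ℕ) :
    Set.EqOn (iteratedDerivWithin n h (Icc 0 ε)) (G φ ε n) (Icc 0 ε) := by
  induction n with
  | zero =>
    intro t ht
    rw [iteratedDerivWithin_zero]
    rcases eq_or_lt_of_le ht.1 with h0' | h0'
    · rw [← h0', hh0, G_zero]
      simp [ψ, iteratedDerivWithin_zero, h0]
    · rw [hh t ⟨h0', ht.2⟩]
      simp only [G, pow_zero, one_mul, ψ, iteratedDerivWithin_zero]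
      rw [intervalIntegral.integral_comp_mul_left _ (ne_of_gt h0')]
      simp [smul_eq_mul, div_eq_inv_mul]
  | succ n ih =>
    intro t ht
    rw [iteratedDerivWithin_succ,
      derivWithin_congr ih (ih ht),
      (G_hasDeriv hε hφ n ht).derivWithin (uniqueDiffOn_Icc hε t ht)]

end Stmt12Aux

/-- `h^{(n)}(0) = φ^{(n)}(0)/(n+1)` and `h^{(n)}(t) → φ^{(n)}(0)/(n+1)` as `t → 0⁺`. -/
theorem stmt12 (ε : ℝ) (hε : 0 < ε) (φ h : ℝ → ℝ)
    (hφ : ContDiffOn ℝ (⊤:ℕ∞) φ (Set.Icc 0 ε)) (h0 : φ 0 = 0)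
    (hh : ∀ t ∈ Set.Ioc (0:ℝ) ε, h t = (∫ τ in (0:ℝ)..t, φ τ) / t)
    (hh0 : h 0 = 0) :
    ∀ n : ℕ,
      iteratedDerivWithin n h (Set.Icc 0 ε) 0
        = iteratedDerivWithin n φ (Set.Icc 0 ε) 0 / (n + 1) ∧
      Tendsto (fun t => iteratedDerivWithin n h (Set.Icc 0 ε) t) (𝓝[>] 0)
        (𝓝 (iteratedDerivWithin n φ (Set.Icc 0 ε) 0 / (n + 1))) := by
  
  intro n
  have hmem0 : (0:ℝ) ∈ Set.Icc 0 ε := ⟨le_rfl, hε.le⟩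
  have heq := Stmt12Aux.main_eqOn hε hφ hh hh0 h0 n
  have hval : iteratedDerivWithin n h (Set.Icc 0 ε) 0
      = iteratedDerivWithin n φ (Set.Icc 0 ε) 0 / (n + 1) := by
    rw [heq hmem0, Stmt12Aux.G_zero]
    rfl
  refine ⟨hval, ?_⟩
  have hle : 𝓝[>] (0:ℝ) ≤ 𝓝[Set.Icc 0 ε] 0 := by
    rw [← nhdsWithin_Ioc_eq_nhdsGT hε]
    exact nhdsWithin_mono _ Set.Ioc_subset_Icc_self
  have h2 : Tendsto (Stmt12Aux.G φ ε n) (𝓝[>] 0) (𝓝 (Stmt12Aux.G φ ε n 0)) :=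
    Tendsto.mono_left (Stmt12Aux.G_cont hε hφ n 0 hmem0) hle
  rw [Stmt12Aux.G_zero] at h2
  simp only [Stmt12Aux.ψ] at h2
  refine Tendsto.congr' ?_ h2
  filter_upwards [Ioc_mem_nhdsGT hε] with t htmem
  exact (heq (Set.Ioc_subset_Icc_self htmem)).symm
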